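/- Let R be a commutative ring with unity in which n is invertible, let G = ⟨x | x^n = 1⟩ be a cyclic group of order n, and let σ be an R-algebra endomorphism of RG that is the R-linear extension of a group endomorphism of G (so σ(x) = x^u for some u ∈ {0, 1, …, n−1}). Then RG is (σ,σ)-differentially trivial: the only (σ,σ)-derivation of RG is the zero map. -/

import Mathlib

/-- The generator `x` of the cyclic group of order `n`, viewed inside the group ring
`R[Multiplicative (ZMod n)]`. -/
noncomputable def xgen (R : Type*) [CommRing R] (n : ℕ) :
    MonoidAlgebra R (Multiplicative (ZMod n)) :=
  MonoidAlgebra.of R (Multiplicative (ZMod n)) (Multiplicative.ofAdd (1 : ZMod n))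

/-- If `n` is invertible in `R` and `σ` is the `R`-algebra endomorphism of
the group ring of `⟨x | x^n = 1⟩` with `σ x = x^u` (`u < n`), then the only
`(σ,σ)`-derivation of `RG` is the zero map. -/
theorem stmt16 {R : Type*} [CommRing R] (n u : ℕ) [NeZero n]
    (hn : IsUnit (n : R)) (hu : u < n)
    (σ : MonoidAlgebra R (Multiplicative (ZMod n)) →ₐ[R] MonoidAlgebra R (Multiplicative (ZMod n)))
    (hσ : σ (xgen R n) = xgen R n ^ u) :
    ∀ D : MonoidAlgebra R (Multiplicative (ZMod n)) →ₗ[R] MonoidAlgebra R (Multiplicative (ZMod n)),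
      (∀ a b, D (a * b) = D a * σ b + σ a * D b) → D = 0 := by
  intro D hD
  set X := xgen R n with hX
  -- D 1 = 0
  have hD1 : D 1 = 0 := by
    have h := hD 1 1
    simp only [mul_one, map_one, one_mul] at h
    exact (add_eq_left).mp h.symm
  -- power rule
  have hpow : ∀ (a : MonoidAlgebra R (Multiplicative (ZMod n))) (k : ℕ),
      D (a ^ (k + 1)) = ((k : MonoidAlgebra R (Multiplicative (ZMod n))) + 1) *
        (σ a ^ k * D a) := by
    intro a k
    induction k with
    | zero => simp
    | succ k ih =>
      rw [pow_succ, hD, ih, map_pow]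
      push_cast
      ring
  -- X ^ n = 1
  have hXn : X ^ n = 1 := by
    rw [hX, xgen, ← map_pow]
    have : (Multiplicative.ofAdd (1 : ZMod n)) ^ n = 1 := by
      rw [← ofAdd_nsmul, nsmul_eq_mul, mul_one, ZMod.natCast_self, ofAdd_zero]
    rw [this, map_one]
  -- X is a unit
  have hXu : IsUnit X := IsUnit.of_pow_eq_one hXn (NeZero.ne n)
  have hσXu : IsUnit (σ X) := by rw [hσ]; exact hXu.pow u
  have hnA : IsUnit ((n : ℕ) : MonoidAlgebra R (Multiplicative (ZMod n))) := by
    have := hn.map (algebraMap R (MonoidAlgebra R (Multiplicative (ZMod n))))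
    rwa [map_natCast] at this
  -- D X = 0
  have hDX : D X = 0 := by
    have h := hpow X (n - 1)
    rw [Nat.sub_add_cancel (NeZero.one_le), hXn, hD1] at h
    have hcast : ((n - 1 : ℕ) : MonoidAlgebra R (Multiplicative (ZMod n))) + 1
        = ((n : ℕ) : MonoidAlgebra R (Multiplicative (ZMod n))) := by
      have : ((n - 1 : ℕ) : MonoidAlgebra R (Multiplicative (ZMod n)))
          = (n : MonoidAlgebra R (Multiplicative (ZMod n))) - 1 := by
        push_cast [Nat.cast_sub (NeZero.one_le : 1 ≤ n)]; ring
      rw [this]; ring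
    rw [hcast] at h
    have hu2 : IsUnit (((n : ℕ) : MonoidAlgebra R (Multiplicative (ZMod n)))
        * σ X ^ (n - 1)) := hnA.mul (hσXu.pow (n - 1))
    have h' : (((n : ℕ) : MonoidAlgebra R (Multiplicative (ZMod n)))
        * σ X ^ (n - 1)) * D X = 0 := by rw [mul_assoc]; exact h.symm
    exact (hu2.mul_right_eq_zero).mp h'
  -- D on powers of X
  have hDXk : ∀ k : ℕ, D (X ^ k) = 0 := by
    intro k
    cases k with
    | zero => simpa using hD1
    | succ k => rw [hpow X k, hDX, mul_zero, mul_zero]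
  -- extensionality
  -- every basis element is a power of X
  have hsingle : ∀ g : Multiplicative (ZMod n),
      MonoidAlgebra.single g (1 : R) = X ^ (Multiplicative.toAdd g).val := by
    intro g
    rw [hX, xgen, ← map_pow]
    have : (Multiplicative.ofAdd (1 : ZMod n)) ^ (Multiplicative.toAdd g).val = g := by
      rw [← ofAdd_nsmul, nsmul_eq_mul, mul_one, ZMod.natCast_val, ZMod.cast_id]
      rfl
    rw [this]
    rfl
  refine MonoidAlgebra.lhom_ext' fun g => LinearMap.ext fun r => ?_
  have : (MonoidAlgebra.single g r : MonoidAlgebra R (Multiplicative (ZMod n)))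
      = r • MonoidAlgebra.single g (1 : R) := by
    rw [MonoidAlgebra.smul_single', mul_one]
  show D (MonoidAlgebra.single g r) = 0
  rw [this, map_smul, hsingle, hDXk, smul_zero]
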